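/- Let (V,E) be a graph and β a point of the boundary of its configuration variety in P^{|V|−2} × P^{|V|−2} (i.e., β satisfies all edge equations λ_e(z_k−z_l)(w_k−w_l) = λ_f(z_i−z_j)(w_i−w_j) and (z_i−z_j)(w_i−w_j) = 0 for every edge). Color an edge (i,j) red if z_i − z_j vanishes at β and blue otherwise. Then this coloring is a NAC-coloring: both color classes are nonempty and every cycle is either monochromatic or contains at least two edges of each color. -/

import Mathlib

open PowerSeries

namespace NACaux

lemma order_eq_zero {φ : PowerSeries ℂ} (h : PowerSeries.constantCoeff φ ≠ 0) :
    φ.order = 0 := by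
  by_contra hne
  have hpos : 0 < φ.order := pos_iff_ne_zero.mpr hne
  have h0 : PowerSeries.coeff 0 φ = 0 :=
    PowerSeries.coeff_of_lt_order 0 (by simpa using hpos)
  exact h (by simpa [PowerSeries.coeff_zero_eq_constantCoeff] using h0)

lemma one_le_order {φ : PowerSeries ℂ} (h : PowerSeries.constantCoeff φ = 0) :
    1 ≤ φ.order := by
  have := PowerSeries.nat_le_order φ 1 (fun i hi => by
    interval_cases i
    simpa [PowerSeries.coeff_zero_eq_constantCoeff] using h)
  simpa using this

lemma walk_const {V : Type} {G : SimpleGraph V} (f : V → ℂ)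
    (h : ∀ i j, G.Adj i j → f i = f j) : ∀ {u v : V}, G.Walk u v → f u = f v := by
  intro u v p
  induction p with
  | nil => rfl
  | cons hadj _ ih => exact (h _ _ hadj).trans ih

lemma telescope {N : ℕ} [NeZero N] (g : Fin N → PowerSeries ℂ) :
    ∑ i : Fin N, (g i - g (i + 1)) = 0 := by
  rw [Finset.sum_sub_distrib]
  rw [sub_eq_zero]
  exact (Fintype.sum_equiv (Equiv.addRight (1 : Fin N)) (fun i => g (i + 1)) g
    (fun x => rfl)).symm

end NACaux

/-- An edge `{i,j}` is red at a boundary point if the form `z_i - z_j` vanishes there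
(the boundary point is recorded by the constant coefficients of power series that
parametrize a branch of the configuration variety through it). -/
def IsRedEdge {V : Type} (z : V → PowerSeries ℂ) (i j : V) : Prop :=
  PowerSeries.constantCoeff (z i - z j) = 0

/-- Lemma `lem:NAC`: the coloring defined by a point on the boundary of the configuration
variety of a connected graph `(V, E, λ)` — edge `(i,j)` red if `z_i - z_j` vanishes at the
point, blue otherwise — is a NAC-coloring: both color classes are nonempty and no cycle
has exactly one edge of some color.  The boundary point lies in
`P^{|V|-2} × P^{|V|-2}`; here a branch of the configuration variety through it is given by
power-series coordinates `z, w : V → ℂ[[t]]` (normalized by `z_{v₀} = w_{v₀} = 0`)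
satisfying the bihomogeneous edge equations
`λ_{ij}(z_k - z_l)(w_k - w_l) = λ_{kl}(z_i - z_j)(w_i - w_j)`, generically not on the
boundary, and with all edge forms `(z_i - z_j)(w_i - w_j)` vanishing at the point. -/
theorem boundary_point_gives_NAC_coloring
    (V : Type) [Fintype V] [DecidableEq V] (G : SimpleGraph V) (hconn : G.Connected)
    (lam : V → V → ℝ)
    (hpos : ∀ u v, G.Adj u v → 0 < lam u v) (hsymm : ∀ u v, lam u v = lam v u)
    (z w : V → PowerSeries ℂ) (v₀ : V) (hz0 : z v₀ = 0) (hw0 : w v₀ = 0)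
    (heq : ∀ i j k l, G.Adj i j → G.Adj k l →
      PowerSeries.C ((lam i j : ℝ) : ℂ) * ((z k - z l) * (w k - w l)) =
        PowerSeries.C ((lam k l : ℝ) : ℂ) * ((z i - z j) * (w i - w j)))
    (hgen : ∃ i j, G.Adj i j ∧ (z i - z j) * (w i - w j) ≠ 0)
    (hboundary : ∀ i j, G.Adj i j →
      PowerSeries.constantCoeff ((z i - z j) * (w i - w j)) = 0)
    (hzproj : ∃ v, PowerSeries.constantCoeff (z v) ≠ 0)
    (hwproj : ∃ v, PowerSeries.constantCoeff (w v) ≠ 0) :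
    (∃ i j, G.Adj i j ∧ IsRedEdge z i j) ∧
    (∃ i j, G.Adj i j ∧ ¬ IsRedEdge z i j) ∧
    ∀ (n : ℕ) (c : Fin (n + 3) → V), Function.Injective c →
      (∀ i : Fin (n + 3), G.Adj (c i) (c (i + 1))) →
      ({i : Fin (n + 3) | IsRedEdge z (c i) (c (i + 1))}.ncard = 0 ∨
        {i : Fin (n + 3) | IsRedEdge z (c i) (c (i + 1))}.ncard = n + 3 ∨
        (2 ≤ {i : Fin (n + 3) | IsRedEdge z (c i) (c (i + 1))}.ncard ∧
          2 ≤ {i : Fin (n + 3) | ¬ IsRedEdge z (c i) (c (i + 1))}.ncard)) := by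
  classical
  obtain ⟨i₀, j₀, ha₀, hP⟩ := hgen
  set P : PowerSeries ℂ := (z i₀ - z j₀) * (w i₀ - w j₀) with hPdef
  have hlam0 : ((lam i₀ j₀ : ℝ) : ℂ) ≠ 0 := by
    exact_mod_cast (hpos _ _ ha₀).ne'
  have hC0 : PowerSeries.C ((lam i₀ j₀ : ℝ) : ℂ) ≠ 0 := fun h =>
    hlam0 (by simpa using congrArg (PowerSeries.constantCoeff) h)
  have hlamne : ∀ i j, G.Adj i j →
      (((lam i j : ℝ) : ℂ) / ((lam i₀ j₀ : ℝ) : ℂ)) ≠ 0 := fun i j hij =>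
    div_ne_zero (by exact_mod_cast (hpos i j hij).ne') hlam0
  have hprod : ∀ i j, G.Adj i j → (z i - z j) * (w i - w j)
      = PowerSeries.C (((lam i j : ℝ) : ℂ) / ((lam i₀ j₀ : ℝ) : ℂ)) * P := by
    intro i j hij
    have h1 := heq i₀ j₀ i j ha₀ hij
    have h3 : PowerSeries.C ((lam i₀ j₀ : ℝ) : ℂ) *
        (PowerSeries.C (((lam i j : ℝ) : ℂ) / ((lam i₀ j₀ : ℝ) : ℂ)) * P) =
        PowerSeries.C ((lam i j : ℝ) : ℂ) * P := by
      rw [← mul_assoc, ← map_mul]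
      congr 2
      field_simp
    exact mul_left_cancel₀ hC0 (h1.trans h3.symm)
  have hprodne : ∀ i j, G.Adj i j → (z i - z j) * (w i - w j) ≠ 0 := by
    intro i j hij
    rw [hprod i j hij]
    exact mul_ne_zero (fun h =>
      (hlamne i j hij) (by simpa using congrArg (PowerSeries.constantCoeff) h)) hP
  have hzne : ∀ i j, G.Adj i j → z i - z j ≠ 0 := fun i j hij =>
    left_ne_zero_of_mul (hprodne i j hij)
  have hwne : ∀ i j, G.Adj i j → w i - w j ≠ 0 := fun i j hij =>
    right_ne_zero_of_mul (hprodne i j hij)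
  set A : ℕ∞ := P.order with hAdef
  have hA1 : (1 : ℕ∞) ≤ A := NACaux.one_le_order (hboundary i₀ j₀ ha₀)
  have hordsum : ∀ i j, G.Adj i j → (z i - z j).order + (w i - w j).order = A := by
    intro i j hij
    rw [← PowerSeries.order_mul, hprod i j hij, PowerSeries.order_mul,
      NACaux.order_eq_zero (show PowerSeries.constantCoeff
        (PowerSeries.C (((lam i j : ℝ) : ℂ) / ((lam i₀ j₀ : ℝ) : ℂ))) ≠ 0 by
          simpa using hlamne i j hij), zero_add]
  have hblue_w : ∀ i j, G.Adj i j → ¬ IsRedEdge z i j → (w i - w j).order = A := by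
    intro i j hij hred
    have h0 : (z i - z j).order = 0 := NACaux.order_eq_zero hred
    rw [← hordsum i j hij, h0, zero_add]
  have hred_w : ∀ i j, G.Adj i j → IsRedEdge z i j → (w i - w j).order < A := by
    intro i j hij hred
    have h1 : (1 : ℕ∞) ≤ (z i - z j).order := NACaux.one_le_order hred
    have hw_ne_top : (w i - w j).order ≠ ⊤ := by
      simp [PowerSeries.order_eq_top, hwne i j hij]
    rw [← ENat.add_one_le_iff hw_ne_top]
    calc (w i - w j).order + 1 ≤ (w i - w j).order + (z i - z j).order :=
        add_le_add_right h1 _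
      _ = A := by rw [add_comm]; exact hordsum i j hij
  refine ⟨?_, ?_, ?_⟩
  · -- there is a red edge
    by_contra hno
    push_neg at hno
    have hconst : ∀ i j, G.Adj i j →
        PowerSeries.constantCoeff (w i) = PowerSeries.constantCoeff (w j) := by
      intro i j hij
      have hordA := hblue_w i j hij (hno i j hij)
      have hcc : PowerSeries.coeff 0 (w i - w j) = 0 :=
        PowerSeries.coeff_of_lt_order 0 (by
          rw [hordA]
          exact lt_of_lt_of_le (by norm_num) hA1)
      rw [map_sub] at hcc
      have := sub_eq_zero.mp hcc
      simpa [PowerSeries.coeff_zero_eq_constantCoeff] using this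
    obtain ⟨v, hv⟩ := hwproj
    have hvv : PowerSeries.constantCoeff (w v) = PowerSeries.constantCoeff (w v₀) :=
      NACaux.walk_const _ hconst ((hconn v v₀).some)
    rw [hw0, map_zero] at hvv
    exact hv hvv
  · -- there is a blue edge
    by_contra hno
    push_neg at hno
    have hconst : ∀ i j, G.Adj i j →
        PowerSeries.constantCoeff (z i) = PowerSeries.constantCoeff (z j) := by
      intro i j hij
      have hred : PowerSeries.constantCoeff (z i - z j) = 0 := hno i j hij
      rw [map_sub] at hred
      exact sub_eq_zero.mp hred
    obtain ⟨v, hv⟩ := hzproj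
    have hvv : PowerSeries.constantCoeff (z v) = PowerSeries.constantCoeff (z v₀) :=
      NACaux.walk_const _ hconst ((hconn v v₀).some)
    rw [hz0, map_zero] at hvv
    exact hv hvv
  · -- cycle condition
    intro n c hcinj hcadj
    set S : Set (Fin (n + 3)) := {i | IsRedEdge z (c i) (c (i + 1))} with hSdef
    have hScompl : {i : Fin (n + 3) | ¬ IsRedEdge z (c i) (c (i + 1))} = Sᶜ := rfl
    rw [hScompl]
    have htot : S.ncard + Sᶜ.ncard = n + 3 := by
      rw [Set.ncard_add_ncard_compl]
      simp [Nat.card_eq_fintype_card]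
    have hsz : ∑ i : Fin (n + 3), (z (c i) - z (c (i + 1))) = 0 :=
      NACaux.telescope (fun i => z (c i))
    have hsw : ∑ i : Fin (n + 3), (w (c i) - w (c (i + 1))) = 0 :=
      NACaux.telescope (fun i => w (c i))
    have hnot1red : S.ncard ≠ 1 := by
      intro h1
      obtain ⟨k₀, hS1⟩ := Set.ncard_eq_one.mp h1
      have hk₀ : IsRedEdge z (c k₀) (c (k₀ + 1)) := by
        have hmem : k₀ ∈ S := by rw [hS1]; exact Set.mem_singleton _
        exact hmem
      have hne_top : (w (c k₀) - w (c (k₀ + 1))).order < ⊤ :=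
        PowerSeries.order_finite_iff_ne_zero.mpr (hwne _ _ (hcadj k₀))
      set m := (w (c k₀) - w (c (k₀ + 1))).order.lift hne_top with hm
      have hcoeffm : PowerSeries.coeff m (w (c k₀) - w (c (k₀ + 1))) ≠ 0 :=
        by rw [hm, ENat.lift_eq_toNat_of_lt_top hne_top]; exact PowerSeries.coeff_order (hwne _ _ (hcadj k₀))
      have hsum0 : ∑ i : Fin (n + 3),
          PowerSeries.coeff m (w (c i) - w (c (i + 1))) = 0 := by
        rw [← map_sum, hsw, map_zero]
      have heqs : ∑ i : Fin (n + 3), PowerSeries.coeff m (w (c i) - w (c (i + 1)))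
          = PowerSeries.coeff m (w (c k₀) - w (c (k₀ + 1))) := by
        apply Finset.sum_eq_single_of_mem k₀ (Finset.mem_univ _)
        intro b _ hb
        have hbblue : ¬ IsRedEdge z (c b) (c (b + 1)) := by
          intro hred
          have hmem : b ∈ S := hred
          rw [hS1] at hmem
          exact hb (Set.mem_singleton_iff.mp hmem)
        apply PowerSeries.coeff_of_lt_order
        rw [hblue_w _ _ (hcadj b) hbblue]
        calc ((m : ℕ∞)) = (w (c k₀) - w (c (k₀ + 1))).order := ENat.coe_lift _ _
          _ < A := hred_w _ _ (hcadj k₀) hk₀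
      exact hcoeffm (heqs ▸ hsum0)
    have hnot1blue : Sᶜ.ncard ≠ 1 := by
      intro h1
      obtain ⟨k₀, hS1⟩ := Set.ncard_eq_one.mp h1
      have hk₀ : ¬ IsRedEdge z (c k₀) (c (k₀ + 1)) := by
        have hmem : k₀ ∈ Sᶜ := by rw [hS1]; exact Set.mem_singleton _
        exact hmem
      have hsum0 : ∑ i : Fin (n + 3),
          PowerSeries.constantCoeff (z (c i) - z (c (i + 1))) = 0 := by
        rw [← map_sum, hsz, map_zero]
      have heqs : ∑ i : Fin (n + 3), PowerSeries.constantCoeff (z (c i) - z (c (i + 1)))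
          = PowerSeries.constantCoeff (z (c k₀) - z (c (k₀ + 1))) := by
        apply Finset.sum_eq_single_of_mem k₀ (Finset.mem_univ _)
        intro b _ hb
        have hbS : b ∈ S := by
          by_contra hbn
          have hmem : b ∈ Sᶜ := hbn
          rw [hS1] at hmem
          exact hb (Set.mem_singleton_iff.mp hmem)
        exact hbS
      exact hk₀ (show PowerSeries.constantCoeff (z (c k₀) - z (c (k₀ + 1))) = 0 from
        heqs ▸ hsum0)
    omega
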